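/- For atomic steps a, b and commands c, d, assuming interchange, conjunctivity, isolation, and the axiom a^∞ ∥ b^∞ = (a∥b)^∞: a^ω;c ∥ b^ω;d = (a∥b)^ω ; ((c∥d) ⊓ (c ∥ b;b^ω;d) ⊓ (a;a^ω;c ∥ d)). -/
import Mathlib


/-- A Concurrent Refinement Algebra over a complete distributive lattice of
commands, ordered by refinement (`⊓` = nondeterministic choice, `⊥` = abort,
`⊤` = magic), with sequential composition `seq` (identity `nil`),
synchronous parallel `par`, weak conjunction `conj`, a Boolean-style
sub-lattice of atomic steps `Atomic` (with `eps` the environment-step identity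
of `par`) and a sub-lattice of tests `Test`. -/
structure CRA (C : Type*) [CompleteDistribLattice C] where
  seq : C → C → C
  par : C → C → C
  conj : C → C → C
  nil : C
  eps : C
  Atomic : C → Prop
  Test : C → Prop
  seq_assoc : ∀ a b c, seq (seq a b) c = seq a (seq b c)
  seq_nil : ∀ c, seq c nil = c
  nil_seq : ∀ c, seq nil c = c
  seq_mono_left : ∀ d : C, Monotone fun c => seq c d
  seq_mono_right : ∀ c : C, Monotone (seq c)
  top_seq : ∀ c, seq ⊤ c = ⊤
  bot_seq : ∀ c, seq ⊥ c = ⊥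
  /-- sequential composition distributes over arbitrary choices on the right -/
  seq_sInf_distrib : ∀ (S : Set C) (d : C), seq (sInf S) d = ⨅ c ∈ S, seq c d
  par_assoc : ∀ a b c, par (par a b) c = par a (par b c)
  par_comm : ∀ a b, par a b = par b a
  /-- parallel distributes over arbitrary choices -/
  par_sInf_distrib : ∀ (c : C) (S : Set C), par c (sInf S) = ⨅ d ∈ S, par c d
  nil_par_nil : par nil nil = nil
  atomic_par : ∀ a b, Atomic a → Atomic b → Atomic (par a b)
  /-- synchronous interchange law for atomic steps -/
  interchange : ∀ a b c d, Atomic a → Atomic b →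
    par (seq a c) (seq b d) = seq (par a b) (par c d)
  par_atomic_seq_nil : ∀ a c, Atomic a → par (seq a c) nil = ⊤
  atomic_eps : Atomic eps
  /-- `eps` is the identity of parallel on atomic steps -/
  eps_par_atomic : ∀ a, Atomic a → par eps a = a
  conj_assoc : ∀ a b c, conj (conj a b) c = conj a (conj b c)
  conj_comm : ∀ a b, conj a b = conj b a
  conj_idem : ∀ a, conj a a = a
  conj_bot : ∀ c, conj c ⊥ = ⊥
  conj_atomic : ∀ a b, Atomic a → Atomic b → conj a b = a ⊔ b
  conj_test : ∀ t t', Test t → Test t' → conj t t' = t ⊔ t'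
  conj_interchange : ∀ a b c d, Atomic a → Atomic b →
    conj (seq a c) (seq b d) = seq (conj a b) (conj c d)
  conj_atomic_seq_nil : ∀ a c, Atomic a → conj (seq a c) nil = ⊤
  conj_sInf_distrib : ∀ (c : C) (S : Set C), S.Nonempty →
    conj c (sInf S) = ⨅ d ∈ S, conj c d
  atomic_conj : ∀ a b, Atomic a → Atomic b → Atomic (conj a b)
  test_nil : Test nil
  test_nil_le : ∀ t, Test t → nil ≤ t
  test_seq_par_interchange : ∀ t t' c d, Test t → Test t' →
    par (seq t c) (seq t' d) = seq (t ⊔ t') (par c d)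
  conj_test_interchange : ∀ t t' c d, Test t → Test t' →
    conj (seq t c) (seq t' d) = seq (t ⊔ t') (conj c d)

namespace CRA

variable {C : Type*} [CompleteDistribLattice C] (A : CRA C)

/-- possibly infinite iteration `c^ω = μ x. nil ⊓ c;x` -/
def omega (c : C) : C :=
  OrderHom.lfp ⟨fun x => A.nil ⊓ A.seq c x,
    fun _ _ h => inf_le_inf_left _ (A.seq_mono_right c h)⟩

/-- finite iteration `c^* = ν x. nil ⊓ c;x` -/
def star (c : C) : C :=
  OrderHom.gfp ⟨fun x => A.nil ⊓ A.seq c x,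
    fun _ _ h => inf_le_inf_left _ (A.seq_mono_right c h)⟩

/-- infinite iteration `c^∞ = c^ω ; ⊤` -/
def inft (c : C) : C := A.seq (A.omega c) ⊤

/-- finite powers: `c^0 = nil`, `c^(i+1) = c ; c^i` -/
def pow (c : C) : ℕ → C
  | 0 => A.nil
  | n + 1 => A.seq c (pow c n)

end CRA

/-! ### Auxiliary machinery for the proof -/

namespace CRAAux

variable {C : Type*} [CompleteDistribLattice C] (A : CRA C)

/-- binary distribution of `seq` over `⊓` on the left argument -/
lemma seq_inf_left (x y d : C) : A.seq (x ⊓ y) d = A.seq x d ⊓ A.seq y d := by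
  have h := A.seq_sInf_distrib {x, y} d
  rwa [sInf_pair, iInf_pair] at h

/-- binary distribution of `par` over `⊓` on the right argument -/
lemma par_inf_right (x y z : C) : A.par x (y ⊓ z) = A.par x y ⊓ A.par x z := by
  have h := A.par_sInf_distrib x {y, z}
  rwa [sInf_pair, iInf_pair] at h

/-- binary distribution of `par` over `⊓` on the left argument -/
lemma par_inf_left (x y z : C) : A.par (x ⊓ y) z = A.par x z ⊓ A.par y z := by
  rw [A.par_comm (x ⊓ y) z, par_inf_right, A.par_comm z x, A.par_comm z y]

lemma par_mono_right (x : C) {y z : C} (h : y ≤ z) : A.par x y ≤ A.par x z := by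
  have hy : y ⊓ z = y := inf_eq_left.mpr h
  calc A.par x y = A.par x (y ⊓ z) := by rw [hy]
    _ ≤ A.par x z := by
        rw [par_inf_right]
        exact inf_le_right

lemma par_mono_left {x y : C} (z : C) (h : x ≤ y) : A.par x z ≤ A.par y z := by
  rw [A.par_comm x z, A.par_comm y z]
  exact par_mono_right A z h

/-- the map `x ↦ m ; (x ; ⊥)` -/
def chi (m : C) : C →o C :=
  ⟨fun x => A.seq m (A.seq x ⊥),
   fun _ _ h => A.seq_mono_right m (A.seq_mono_left ⊥ h)⟩

/-- `ι` : the `⊥`-guarded infinite iteration of `m` -/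
def iota (m : C) : C := (chi A m).lfp

lemma iota_fix (m : C) : A.seq m (A.seq (iota A m) ⊥) = iota A m :=
  OrderHom.map_lfp (chi A m)

lemma iota_seq_bot (m : C) : A.seq (iota A m) ⊥ = iota A m := by
  conv_lhs => rw [← iota_fix A m]
  rw [A.seq_assoc, A.seq_assoc, A.bot_seq, iota_fix]

/-- `ι` absorbs arbitrary sequential continuations -/
lemma iota_seq (m t : C) : A.seq (iota A m) t = iota A m := by
  conv_lhs => rw [← iota_seq_bot A m]
  rw [A.seq_assoc, A.bot_seq, iota_seq_bot]

lemma seq_iota (m : C) : A.seq m (iota A m) = iota A m := by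
  conv_lhs => rw [← iota_seq_bot A m]
  exact iota_fix A m

/-- minimality of `ι` among prefix-closed elements -/
lemma iota_le {m z : C} (h : A.seq m z ≤ z) : iota A m ≤ z := by
  apply OrderHom.lfp_le
  show A.seq m (A.seq z ⊥) ≤ z
  calc A.seq m (A.seq z ⊥) ≤ A.seq m (A.seq z A.nil) :=
        A.seq_mono_right m (A.seq_mono_right z bot_le)
    _ = A.seq m z := by rw [A.seq_nil]
    _ ≤ z := h

/-- the map `x ↦ e ⊓ m ; x` -/
def psi (m e : C) : C →o C :=
  ⟨fun x => e ⊓ A.seq m x,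
   fun _ _ h => inf_le_inf_left _ (A.seq_mono_right m h)⟩

/-- Isolation for the guarded map: `lfp ψ = gfp ψ ⊓ ι`. -/
lemma psi_lfp_eq (hconj : ∀ (c : C) (S : Set C), S.Nonempty →
      A.seq c (sInf S) = ⨅ d ∈ S, A.seq c d) (m e : C) :
    (psi A m e).lfp = (psi A m e).gfp ⊓ iota A m := by
  have hconj2 : ∀ x y : C, A.seq m (x ⊓ y) = A.seq m x ⊓ A.seq m y := by
    intro x y
    have h := hconj m {x, y} ⟨x, by simp⟩
    rwa [sInf_pair, iInf_pair] at h
  have hgfix : e ⊓ A.seq m (psi A m e).gfp = (psi A m e).gfp :=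
    OrderHom.map_gfp (psi A m e)
  have hge : (psi A m e).gfp ≤ e := by
    conv_lhs => rw [← hgfix]
    exact inf_le_left
  have hgm : (psi A m e).gfp ≤ A.seq m (psi A m e).gfp := by
    conv_lhs => rw [← hgfix]
    exact inf_le_right
  apply le_antisymm
  · refine le_inf (OrderHom.lfp_le _ (OrderHom.map_gfp (psi A m e)).le) ?_
    apply OrderHom.lfp_le
    show e ⊓ A.seq m (iota A m) ≤ iota A m
    rw [seq_iota]
    exact inf_le_right
  · apply OrderHom.le_lfp
    intro w hw
    have hw' : e ⊓ A.seq m w ≤ w := hw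
    have hq : A.seq m ((psi A m e).gfp ⇨ w) ≤ (psi A m e).gfp ⇨ w := by
      rw [le_himp_iff]
      refine le_trans (le_inf ?_ ?_) hw'
      · exact inf_le_right.trans hge
      · calc A.seq m ((psi A m e).gfp ⇨ w) ⊓ (psi A m e).gfp
            ≤ A.seq m ((psi A m e).gfp ⇨ w) ⊓ A.seq m (psi A m e).gfp :=
              inf_le_inf_left _ hgm
          _ = A.seq m (((psi A m e).gfp ⇨ w) ⊓ (psi A m e).gfp) := (hconj2 _ _).symm
          _ ≤ A.seq m w := A.seq_mono_right m himp_inf_le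
    have hι : iota A m ≤ (psi A m e).gfp ⇨ w := iota_le A hq
    calc (psi A m e).gfp ⊓ iota A m ≤ (psi A m e).gfp ⊓ ((psi A m e).gfp ⇨ w) :=
          inf_le_inf_left _ hι
      _ ≤ w := inf_himp_le

/-- Any fixed point of `ψ` lying below `ι` equals `lfp ψ`. -/
lemma eq_lfp_psi (hconj : ∀ (c : C) (S : Set C), S.Nonempty →
      A.seq c (sInf S) = ⨅ d ∈ S, A.seq c d) {m e x : C}
    (hfix : e ⊓ A.seq m x = x) (hι : x ≤ iota A m) : x = (psi A m e).lfp := by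
  have h1 : (psi A m e).lfp ≤ x := OrderHom.lfp_le _ hfix.le
  have h2 : x ≤ (psi A m e).gfp := OrderHom.le_gfp _ hfix.ge
  refine le_antisymm ?_ h1
  rw [psi_lfp_eq A hconj m e]
  exact le_inf h2 hι

end CRAAux

theorem atomic_iteration_either {C : Type*} [CompleteDistribLattice C] (A : CRA C)
    (hconj : ∀ (c : C) (S : Set C), S.Nonempty → A.seq c (sInf S) = ⨅ d ∈ S, A.seq c d) (a b c d : C) (ha : A.Atomic a) (hb : A.Atomic b)
    (hinf : A.par (A.inft a) (A.inft b) = A.inft (A.par a b)) :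
    A.par (A.seq (A.omega a) c) (A.seq (A.omega b) d) =
      A.seq (A.omega (A.par a b))
        (A.par c d ⊓ A.par c (A.seq b (A.seq (A.omega b) d)) ⊓
          A.par (A.seq a (A.seq (A.omega a) c)) d) := by
  set m := A.par a b with hm
  set E := A.par c d ⊓ A.par c (A.seq b (A.seq (A.omega b) d)) ⊓
      A.par (A.seq a (A.seq (A.omega a) c)) d with hE
  set L := A.par (A.seq (A.omega a) c) (A.seq (A.omega b) d) with hL
  set R := A.seq (A.omega m) E with hR
  -- unfoldings of omega
  have ha0 : A.nil ⊓ A.seq a (A.omega a) = A.omega a :=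
    OrderHom.map_lfp ⟨fun x => A.nil ⊓ A.seq a x,
      fun _ _ h => inf_le_inf_left _ (A.seq_mono_right a h)⟩
  have hb0 : A.nil ⊓ A.seq b (A.omega b) = A.omega b :=
    OrderHom.map_lfp ⟨fun x => A.nil ⊓ A.seq b x,
      fun _ _ h => inf_le_inf_left _ (A.seq_mono_right b h)⟩
  have hm0 : A.nil ⊓ A.seq m (A.omega m) = A.omega m :=
    OrderHom.map_lfp ⟨fun x => A.nil ⊓ A.seq m x,
      fun _ _ h => inf_le_inf_left _ (A.seq_mono_right m h)⟩
  have ea : A.seq (A.omega a) c = c ⊓ A.seq a (A.seq (A.omega a) c) := by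
    conv_lhs => rw [← ha0]
    rw [CRAAux.seq_inf_left, A.nil_seq, A.seq_assoc]
  have eb : A.seq (A.omega b) d = d ⊓ A.seq b (A.seq (A.omega b) d) := by
    conv_lhs => rw [← hb0]
    rw [CRAAux.seq_inf_left, A.nil_seq, A.seq_assoc]
  -- L is a fixed point of ψ
  have hLfix : E ⊓ A.seq m L = L := by
    have e2 : A.seq m L =
        A.par (A.seq a (A.seq (A.omega a) c)) (A.seq b (A.seq (A.omega b) d)) := by
      rw [hL, hm, A.interchange a b _ _ ha hb]
    rw [e2]
    conv_rhs => rw [hL, ea, eb, CRAAux.par_inf_left A, CRAAux.par_inf_right A,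
      CRAAux.par_inf_right A]
    rw [hE, inf_assoc]
  -- R is a fixed point of ψ
  have hRfix : E ⊓ A.seq m R = R := by
    conv_rhs => rw [hR]
    conv_rhs => rw [← hm0]
    rw [CRAAux.seq_inf_left, A.nil_seq, A.seq_assoc, ← hR]
  -- omega m is below iota
  have hωι : A.omega m ≤ CRAAux.iota A m := by
    apply OrderHom.lfp_le
    show A.nil ⊓ A.seq m (CRAAux.iota A m) ≤ CRAAux.iota A m
    rw [CRAAux.seq_iota]
    exact inf_le_right
  -- R is below iota
  have hRι : R ≤ CRAAux.iota A m := by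
    calc R ≤ A.seq (CRAAux.iota A m) E := A.seq_mono_left E hωι
      _ = CRAAux.iota A m := CRAAux.iota_seq A m E
  -- L is below iota, via hinf
  have hLι : L ≤ CRAAux.iota A m := by
    have h1 : L ≤ A.par (A.seq (A.omega a) ⊤) (A.seq (A.omega b) ⊤) := by
      refine le_trans (CRAAux.par_mono_left A _ (A.seq_mono_right _ le_top)) ?_
      exact CRAAux.par_mono_right A _ (A.seq_mono_right _ le_top)
    have h2 : A.par (A.seq (A.omega a) ⊤) (A.seq (A.omega b) ⊤) = A.seq (A.omega m) ⊤ :=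
      hinf
    have h3 : A.seq (A.omega m) ⊤ ≤ CRAAux.iota A m := by
      calc A.seq (A.omega m) ⊤ ≤ A.seq (CRAAux.iota A m) ⊤ := A.seq_mono_left ⊤ hωι
        _ = CRAAux.iota A m := CRAAux.iota_seq A m ⊤
    exact h1.trans (h2 ▸ h3)
  -- conclude : both are lfp ψ
  have kL : L = (CRAAux.psi A m E).lfp := CRAAux.eq_lfp_psi A hconj hLfix hLι
  have kR : R = (CRAAux.psi A m E).lfp := CRAAux.eq_lfp_psi A hconj hRfix hRι
  exact kL.trans kR.symm
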